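/- Let Q ⊂ ℝ^d, let ∂ be a subset of the boundary of Q with projection π_∂: Q → ∂ and distance function |x|_∂, and fix η ∈ (−2,−1). For a continuous function u: Q \ ∂ → ℝ satisfying |u(x)| ≤ M·|x|_∂^η, define the distribution (ℛu)(ψ) = ∫_Q u(x)(ψ(x) − ψ(π_∂ x)) dx for test functions ψ ∈ C_c^∞. Then ℛu is a well-defined distribution of Hölder regularity η: for every test function ψ supported in the unit ball with ‖ψ‖_{C^1} ≤ 1, every y and every λ ∈ (0,1], one has |(ℛu)(ψ_y^λ)| ≤ C·M·λ^η, where ψ_y^λ(x) = λ^{-|𝔰|} ψ((x−y)/λ) (with anisotropic scaling of scaled dimension |𝔰|) and C depends only on η, d and the geometry of Q. -/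

import Mathlib

open Real MeasureTheory

/-- The tetrahedron `Q = {x ∈ ℝ³ : 0 ≤ x₃ ≤ x₁ ≤ x₂ ≤ 1}` (coordinates indexed 0,1,2). -/
def tetraQ : Set (Fin 3 → ℝ) := {x | 0 ≤ x 2 ∧ x 2 ≤ x 0 ∧ x 0 ≤ x 1 ∧ x 1 ≤ 1}

/-- The projection to the boundary face `{x₃ = 0}`: `π_∂(x₁,x₂,x₃) = (x₁,x₂,0)`. -/
def projB (x : Fin 3 → ℝ) : Fin 3 → ℝ := ![x 0, x 1, 0]

/-- Boundary renormalisation operator `ℛ`: for `η ∈ (-2,-1)` and `u` continuous away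
from the boundary face with `|u(x)| ≤ M x₃^η`, the distribution
`(ℛu)(ψ) = ∫_Q u(x)(ψ(x) - ψ(π_∂ x)) dx` has Hölder regularity `η`:
`|(ℛu)(ψ_y^λ)| ≤ C M λ^η` for all suitably normalised `C¹` test functions `ψ`
supported in the unit ball, with `ψ_y^λ(x) = λ^{-3} ψ((x-y)/λ)`. -/
theorem boundary_renormalisation_regularity (η : ℝ) (hη : η ∈ Set.Ioo (-2 : ℝ) (-1)) :
    ∃ C : ℝ, 0 < C ∧ ∀ M : ℝ, 0 ≤ M → ∀ u : (Fin 3 → ℝ) → ℝ,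
      ContinuousOn u (tetraQ \ {x | x 2 = 0}) →
      (∀ x ∈ tetraQ, x 2 ≠ 0 → |u x| ≤ M * (x 2) ^ η) →
      ∀ ψ : (Fin 3 → ℝ) → ℝ, ContDiff ℝ 1 ψ →
        (∀ x : Fin 3 → ℝ, 1 < Real.sqrt ((x 0) ^ 2 + (x 1) ^ 2 + (x 2) ^ 2) → ψ x = 0) →
        (∀ x, |ψ x| ≤ 1) → (∀ x, ‖fderiv ℝ ψ x‖ ≤ 1) →
        ∀ y : Fin 3 → ℝ, ∀ lam : ℝ, lam ∈ Set.Ioc (0 : ℝ) 1 →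
          |∫ x in tetraQ,
              u x * ((lam⁻¹ ^ 3 * ψ fun i => (x i - y i) / lam) -
                (lam⁻¹ ^ 3 * ψ fun i => (projB x i - y i) / lam))|
            ≤ C * M * lam ^ η := by
  obtain ⟨hη1, hη2⟩ := hη
  have h2η : (0:ℝ) < η + 2 := by linarith
  have h1η : (0:ℝ) < -1 - η := by linarith
  refine ⟨4/(η+2) + 8/(-1-η), by positivity, ?_⟩
  intro M hM u hu hub ψ hψ hψs hψ1 hψd y lam hlam
  obtain ⟨hl0, hl1⟩ := hlam
  have hlne : lam ≠ 0 := hl0.ne'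
  -- Lipschitz bound on ψ
  have hLip : LipschitzWith 1 ψ :=
    lipschitzWith_of_nnnorm_fderiv_le (hψ.differentiable one_ne_zero)
      (fun x => by rw [← NNReal.coe_le_coe, coe_nnnorm, NNReal.coe_one]; exact hψd x)
  -- vanishing of ψ outside unit ball (in coords 0 and 1)
  have hvan : ∀ (v : Fin 3 → ℝ), 1 < |v 0| ∨ 1 < |v 1| → ψ v = 0 := by
    intro v hv
    apply hψs
    rw [show (1:ℝ) = Real.sqrt 1 by simp]
    apply Real.sqrt_lt_sqrt (by norm_num)
    rcases hv with h | h <;>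
      nlinarith [sq_abs (v 0), sq_abs (v 1), sq_nonneg (v 0), sq_nonneg (v 1), sq_nonneg (v 2)]
  -- the 1-d majorant in the x₂ variable
  set g : ℝ → ℝ := fun t => M * (t ^ η * min (2 * lam⁻¹ ^ 3) (lam⁻¹ ^ 4 * t)) with hgdef
  have hmg : Measurable g := by fun_prop
  have hgnn : ∀ t ∈ Set.Icc (0:ℝ) 1, 0 ≤ g t := by
    intro t ht
    exact mul_nonneg hM (mul_nonneg (Real.rpow_nonneg ht.1 η)
      (le_min (by positivity) (mul_nonneg (by positivity) ht.1)))
  -- majorant functions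
  set f0 : ℝ → ℝ := Set.indicator (Set.Icc (y 0 - lam) (y 0 + lam)) (fun _ => 1) with hf0def
  set f1 : ℝ → ℝ := Set.indicator (Set.Icc (y 1 - lam) (y 1 + lam)) (fun _ => 1) with hf1def
  set f2 : ℝ → ℝ := Set.indicator (Set.Icc 0 1) g with hf2def
  set f : Fin 3 → ℝ → ℝ := ![f0, f1, f2] with hfdef
  have hfe0 : f 0 = f0 := rfl
  have hfe1 : f 1 = f1 := rfl
  have hfe2 : f 2 = f2 := rfl
  -- integrability of the pieces
  have hint0 : Integrable f0 :=
    (integrable_indicator_iff measurableSet_Icc).2 (integrableOn_const measure_Icc_lt_top.ne)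
  have hint1 : Integrable f1 :=
    (integrable_indicator_iff measurableSet_Icc).2 (integrableOn_const measure_Icc_lt_top.ne)
  have hdom : IntegrableOn (fun t : ℝ => M * lam⁻¹^4 * t ^ (η+1)) (Set.Ioc (0:ℝ) 1) :=
    (intervalIntegrable_iff_integrableOn_Ioc_of_le (by norm_num)).1
      ((intervalIntegral.intervalIntegrable_rpow' (by linarith)).const_mul (M * lam⁻¹^4))
  have hgI : IntegrableOn g (Set.Ioc (0:ℝ) 1) := by
    apply hdom.mono' (hmg.aestronglyMeasurable.restrict)
    rw [ae_restrict_iff' measurableSet_Ioc]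
    filter_upwards with t ht
    obtain ⟨ht0, ht1⟩ := ht
    rw [Real.norm_eq_abs, abs_of_nonneg (hgnn t ⟨ht0.le, ht1⟩)]
    calc g t ≤ M * (t^η * (lam⁻¹^4 * t)) :=
          mul_le_mul_of_nonneg_left
            (mul_le_mul_of_nonneg_left (min_le_right _ _) (Real.rpow_nonneg ht0.le η)) hM
      _ = M * lam⁻¹^4 * t^(η+1) := by rw [Real.rpow_add_one ht0.ne']; ring
  have hint2 : Integrable f2 := by
    rw [hf2def, integrable_indicator_iff measurableSet_Icc]
    exact (integrableOn_Icc_iff_integrableOn_Ioc enorm_ne_top).2 hgI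
  have hfint : ∀ i, Integrable (f i) := by
    intro i
    fin_cases i
    · exact hint0
    · exact hint1
    · exact hint2
  have hFint : Integrable (fun x : Fin 3 → ℝ => ∏ i, f i (x i)) :=
    Integrable.fin_nat_prod hfint
  have hFnn : ∀ x : Fin 3 → ℝ, 0 ≤ ∏ i, f i (x i) := by
    intro x
    apply Finset.prod_nonneg
    intro i _
    fin_cases i
    · exact Set.indicator_nonneg (fun _ _ => zero_le_one) _
    · exact Set.indicator_nonneg (fun _ _ => zero_le_one) _
    · exact Set.indicator_nonneg hgnn _
  -- measurability of tetraQ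
  have hQ : MeasurableSet tetraQ := by
    have he : tetraQ = {x : Fin 3 → ℝ | 0 ≤ x 2} ∩ ({x | x 2 ≤ x 0} ∩ ({x | x 0 ≤ x 1} ∩ {x | x 1 ≤ 1})) :=
      Set.ext fun x => Iff.rfl
    rw [he]
    exact (measurableSet_le measurable_const (measurable_pi_apply 2)).inter
      ((measurableSet_le (measurable_pi_apply 2) (measurable_pi_apply 0)).inter
        ((measurableSet_le (measurable_pi_apply 0) (measurable_pi_apply 1)).inter
          (measurableSet_le (measurable_pi_apply 1) measurable_const)))
  -- the pointwise bound
  have key : ∀ x ∈ tetraQ,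
      ‖u x * ((lam⁻¹ ^ 3 * ψ fun i => (x i - y i) / lam) -
        (lam⁻¹ ^ 3 * ψ fun i => (projB x i - y i) / lam))‖ ≤ ∏ i, f i (x i) := by
    intro x hx
    have hxQ := hx
    obtain ⟨hx2, hx20, hx01, hx11⟩ := hx
    set a : Fin 3 → ℝ := fun i => (x i - y i) / lam with ha
    set b : Fin 3 → ℝ := fun i => (projB x i - y i) / lam with hb
    have hb0 : b 0 = a 0 := rfl
    have hb1 : b 1 = a 1 := rfl
    have hprod : (∏ i, f i (x i)) = f0 (x 0) * f1 (x 1) * f2 (x 2) := Fin.prod_univ_three _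
    rw [hprod]
    by_cases h0 : x 0 ∈ Set.Icc (y 0 - lam) (y 0 + lam)
    swap
    · -- outside the support in the x₀ direction
      have habs : 1 < |a 0| := by
        simp only [Set.mem_Icc, not_and_or, not_le] at h0
        show 1 < |(x 0 - y 0) / lam|
        rw [abs_div, abs_of_pos hl0, lt_div_iff₀ hl0, one_mul]
        rcases h0 with h | h
        · rw [abs_of_neg (by linarith)]; linarith
        · rw [abs_of_pos (by linarith)]; linarith
      have hψa : ψ a = 0 := hvan a (Or.inl habs)
      have hψb : ψ b = 0 := hvan b (Or.inl (hb0 ▸ habs))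
      rw [hψa, hψb]
      have : f0 (x 0) = 0 := Set.indicator_of_notMem h0 _
      rw [this]
      simp
    by_cases h1 : x 1 ∈ Set.Icc (y 1 - lam) (y 1 + lam)
    swap
    · have habs : 1 < |a 1| := by
        simp only [Set.mem_Icc, not_and_or, not_le] at h1
        show 1 < |(x 1 - y 1) / lam|
        rw [abs_div, abs_of_pos hl0, lt_div_iff₀ hl0, one_mul]
        rcases h1 with h | h
        · rw [abs_of_neg (by linarith)]; linarith
        · rw [abs_of_pos (by linarith)]; linarith
      have hψa : ψ a = 0 := hvan a (Or.inr habs)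
      have hψb : ψ b = 0 := hvan b (Or.inr (hb1 ▸ habs))
      rw [hψa, hψb]
      have : f1 (x 1) = 0 := Set.indicator_of_notMem h1 _
      rw [this]
      simp
    · -- inside the box
      have hx2I : x 2 ∈ Set.Icc (0:ℝ) 1 := ⟨hx2, by linarith⟩
      have e0 : f0 (x 0) = 1 := Set.indicator_of_mem h0 _
      have e1 : f1 (x 1) = 1 := Set.indicator_of_mem h1 _
      have e2 : f2 (x 2) = g (x 2) := Set.indicator_of_mem hx2I _
      rw [e0, e1, e2, one_mul, one_mul]
      rcases eq_or_lt_of_le hx2 with h20 | h20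
      · -- on the boundary: the two terms cancel
        have hab : a = b := by
          funext i
          fin_cases i
          · rfl
          · rfl
          · show (x 2 - y 2)/lam = (projB x 2 - y 2)/lam
            have : projB x 2 = 0 := rfl
            rw [this, ← h20]
        rw [hab, sub_self, mul_zero, norm_zero]
        exact hgnn _ hx2I
      · -- away from the boundary
        have hD : |lam⁻¹ ^ 3 * ψ a - lam⁻¹ ^ 3 * ψ b| ≤ min (2 * lam⁻¹^3) (lam⁻¹^4 * x 2) := by
          apply le_min
          · calc |lam⁻¹ ^ 3 * ψ a - lam⁻¹ ^ 3 * ψ b| ≤ |lam⁻¹ ^ 3 * ψ a| + |lam⁻¹ ^ 3 * ψ b| :=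
                abs_sub _ _
              _ = lam⁻¹^3 * |ψ a| + lam⁻¹^3 * |ψ b| := by
                  rw [abs_mul, abs_mul, abs_of_nonneg (by positivity : (0:ℝ) ≤ lam⁻¹^3)]
              _ ≤ lam⁻¹^3 * 1 + lam⁻¹^3 * 1 := by gcongr <;> [exact hψ1 a; exact hψ1 b]
              _ = 2 * lam⁻¹^3 := by ring
          · have hdist : dist a b ≤ x 2 / lam := by
              rw [dist_pi_le_iff (by positivity)]
              intro i
              fin_cases i
              · show dist (a 0) (b 0) ≤ x 2 / lam
                rw [hb0, dist_self]
                positivity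
              · show dist (a 1) (b 1) ≤ x 2 / lam
                rw [hb1, dist_self]
                positivity
              · show dist ((x 2 - y 2)/lam) ((projB x 2 - y 2)/lam) ≤ x 2 / lam
                have : projB x 2 = 0 := rfl
                rw [this, Real.dist_eq,
                  show (x 2 - y 2)/lam - (0 - y 2)/lam = x 2 / lam by ring,
                  abs_of_nonneg (by positivity)]
            calc |lam⁻¹ ^ 3 * ψ a - lam⁻¹ ^ 3 * ψ b| = lam⁻¹^3 * |ψ a - ψ b| := by
                  rw [← mul_sub, abs_mul, abs_of_nonneg (by positivity : (0:ℝ) ≤ lam⁻¹^3)]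
              _ ≤ lam⁻¹^3 * (x 2 / lam) := by
                  gcongr
                  calc |ψ a - ψ b| = dist (ψ a) (ψ b) := (Real.dist_eq _ _).symm
                    _ ≤ 1 * dist a b := hLip.dist_le_mul a b
                    _ ≤ x 2 / lam := by rw [one_mul]; exact hdist
              _ = lam⁻¹^4 * x 2 := by rw [div_eq_mul_inv, pow_succ]; ring
        rw [Real.norm_eq_abs, abs_mul]
        have hux : |u x| ≤ M * (x 2) ^ η := hub x hxQ h20.ne'
        calc |u x| * |lam⁻¹ ^ 3 * ψ a - lam⁻¹ ^ 3 * ψ b|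
            ≤ (M * (x 2)^η) * min (2 * lam⁻¹^3) (lam⁻¹^4 * x 2) :=
              mul_le_mul hux hD (abs_nonneg _) (mul_nonneg hM (Real.rpow_nonneg hx2 η))
          _ = g (x 2) := by rw [hgdef]; ring
  -- the three 1-d integrals
  have hI0 : ∫ t, f0 t = 2 * lam := by
    rw [hf0def, integral_indicator_const (1:ℝ) measurableSet_Icc, smul_eq_mul, mul_one,
      measureReal_def, Real.volume_Icc, ENNReal.toReal_ofReal (by linarith)]
    ring
  have hI1 : ∫ t, f1 t = 2 * lam := by
    rw [hf1def, integral_indicator_const (1:ℝ) measurableSet_Icc, smul_eq_mul, mul_one,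
      measureReal_def, Real.volume_Icc, ENNReal.toReal_ofReal (by linarith)]
    ring
  -- rpow algebra
  have h4 : lam⁻¹^4 = lam ^ (-4:ℝ) := by
    rw [inv_pow, ← Real.rpow_natCast lam 4, ← Real.rpow_neg hl0.le]; norm_num
  have h3 : lam⁻¹^3 = lam ^ (-3:ℝ) := by
    rw [inv_pow, ← Real.rpow_natCast lam 3, ← Real.rpow_neg hl0.le]; norm_num
  have hpow1 : lam⁻¹^4 * lam^(η+2) = lam^(η-2) := by
    rw [h4, ← Real.rpow_add hl0]; ring_nf
  have hpow2 : lam⁻¹^3 * lam^(η+1) = lam^(η-2) := by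
    rw [h3, ← Real.rpow_add hl0]; ring_nf
  have hI2 : ∫ t, f2 t ≤ M * ((1/(η+2) + 2/(-1-η)) * lam^(η-2)) := by
    have e1 : ∫ t, f2 t = ∫ t in (0:ℝ)..1, g t := by
      rw [hf2def, integral_indicator measurableSet_Icc,
        intervalIntegral.integral_of_le zero_le_one, ← integral_Icc_eq_integral_Ioc]
    have hii1 : IntervalIntegrable g volume 0 lam :=
      (intervalIntegrable_iff_integrableOn_Ioc_of_le hl0.le).2
        (hgI.mono_set (Set.Ioc_subset_Ioc le_rfl hl1))
    have hii2 : IntervalIntegrable g volume lam 1 :=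
      (intervalIntegrable_iff_integrableOn_Ioc_of_le hl1).2
        (hgI.mono_set (Set.Ioc_subset_Ioc hl0.le le_rfl))
    have esplit : ∫ t in (0:ℝ)..1, g t = (∫ t in (0:ℝ)..lam, g t) + ∫ t in lam..1, g t :=
      (intervalIntegral.integral_add_adjacent_intervals hii1 hii2).symm
    have hb1 : ∫ t in (0:ℝ)..lam, g t ≤ ∫ t in (0:ℝ)..lam, M * lam⁻¹^4 * t^(η+1) := by
      apply intervalIntegral.integral_mono_on hl0.le hii1
        ((intervalIntegral.intervalIntegrable_rpow' (by linarith)).const_mul (M * lam⁻¹^4))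
      intro t ht
      rcases eq_or_lt_of_le ht.1 with h | h
      · rw [hgdef]
        simp only [← h]
        rw [mul_zero, min_eq_right (by positivity : (0:ℝ) ≤ 2 * lam⁻¹^3), mul_zero, mul_zero,
          Real.zero_rpow (by linarith : η + 1 ≠ 0), mul_zero]
      · calc g t ≤ M * (t^η * (lam⁻¹^4 * t)) :=
              mul_le_mul_of_nonneg_left
                (mul_le_mul_of_nonneg_left (min_le_right _ _) (Real.rpow_nonneg h.le η)) hM
          _ = M * lam⁻¹^4 * t^(η+1) := by rw [Real.rpow_add_one h.ne']; ring
    have hc1 : ∫ t in (0:ℝ)..lam, M * lam⁻¹^4 * t^(η+1) = M * lam⁻¹^4 * (lam^(η+2)/(η+2)) := by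
      rw [intervalIntegral.integral_const_mul, integral_rpow (Or.inl (by linarith))]
      rw [show η + 1 + 1 = η + 2 by ring, Real.zero_rpow (by linarith : η + 2 ≠ 0)]
      ring
    have hb2 : ∫ t in lam..1, g t ≤ ∫ t in lam..1, M * (2 * lam⁻¹^3) * t^η := by
      apply intervalIntegral.integral_mono_on hl1 hii2
        ((intervalIntegral.intervalIntegrable_rpow (Or.inr (Set.notMem_uIcc_of_lt hl0 one_pos))).const_mul
          (M * (2 * lam⁻¹^3)))
      intro t ht
      have ht0 : (0:ℝ) < t := lt_of_lt_of_le hl0 ht.1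
      calc g t ≤ M * (t^η * (2 * lam⁻¹^3)) :=
            mul_le_mul_of_nonneg_left
              (mul_le_mul_of_nonneg_left (min_le_left _ _) (Real.rpow_nonneg ht0.le η)) hM
        _ = M * (2 * lam⁻¹^3) * t^η := by ring
    have hc2 : ∫ t in lam..1, M * (2 * lam⁻¹^3) * t^η
        = M * (2 * lam⁻¹^3) * ((1 - lam^(η+1))/(η+1)) := by
      rw [intervalIntegral.integral_const_mul,
        integral_rpow (Or.inr ⟨by linarith, Set.notMem_uIcc_of_lt hl0 one_pos⟩)]
      rw [Real.one_rpow]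
    have hlamp : 0 ≤ lam ^ (η+1) := Real.rpow_nonneg hl0.le _
    have hne1 : η + 1 ≠ 0 := by linarith
    have hne2 : (-1 - η : ℝ) ≠ 0 := by linarith
    have hfrac : (1 - lam^(η+1))/(η+1) ≤ lam^(η+1) / (-1-η) := by
      rw [show (1 - lam^(η+1))/(η+1) = (lam^(η+1) - 1)/(-1-η) by field_simp; ring]
      exact (div_le_div_iff_of_pos_right h1η).2 (by linarith)
    calc ∫ t, f2 t = (∫ t in (0:ℝ)..lam, g t) + ∫ t in lam..1, g t := by rw [e1, esplit]
      _ ≤ M * lam⁻¹^4 * (lam^(η+2)/(η+2)) + M * (2 * lam⁻¹^3) * (lam^(η+1)/(-1-η)) := by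
          apply add_le_add (hc1 ▸ hb1)
          refine le_trans (hc2 ▸ hb2) ?_
          apply mul_le_mul_of_nonneg_left hfrac (by positivity)
      _ = M * ((1/(η+2)) * (lam⁻¹^4 * lam^(η+2)) + (2/(-1-η)) * (lam⁻¹^3 * lam^(η+1))) := by
          ring
      _ = M * ((1/(η+2) + 2/(-1-η)) * lam^(η-2)) := by rw [hpow1, hpow2]; ring
  -- putting everything together
  have hF2nn : 0 ≤ ∫ t, f2 t := by
    apply integral_nonneg
    intro t
    exact Set.indicator_nonneg hgnn t
  have step1 : |∫ x in tetraQ,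
      u x * ((lam⁻¹ ^ 3 * ψ fun i => (x i - y i) / lam) -
        (lam⁻¹ ^ 3 * ψ fun i => (projB x i - y i) / lam))|
      ≤ ∫ x in tetraQ, ∏ i, f i (x i) := by
    rw [← Real.norm_eq_abs]
    exact norm_integral_le_of_norm_le (hFint.restrict)
      (((ae_restrict_iff' hQ).2 (Filter.Eventually.of_forall key)))
  have step2 : (∫ x in tetraQ, ∏ i, f i (x i)) ≤ ∫ x : Fin 3 → ℝ, ∏ i, f i (x i) :=
    setIntegral_le_integral hFint (Filter.Eventually.of_forall hFnn)
  have step3 : (∫ x : Fin 3 → ℝ, ∏ i, f i (x i)) = (∫ t, f0 t) * (∫ t, f1 t) * ∫ t, f2 t := by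
    rw [volume_pi, integral_fin_nat_prod_eq_prod f, Fin.prod_univ_three]; rfl
  have hpowf : lam * lam * lam^(η-2) = lam^η := by
    rw [show lam * lam = lam ^ (2:ℝ) by rw [Real.rpow_two]; ring, ← Real.rpow_add hl0]
    ring_nf
  calc |∫ x in tetraQ,
      u x * ((lam⁻¹ ^ 3 * ψ fun i => (x i - y i) / lam) -
        (lam⁻¹ ^ 3 * ψ fun i => (projB x i - y i) / lam))|
      ≤ ∫ x : Fin 3 → ℝ, ∏ i, f i (x i) := le_trans step1 step2
    _ = (2*lam) * (2*lam) * ∫ t, f2 t := by rw [step3, hI0, hI1]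
    _ ≤ (2*lam) * (2*lam) * (M * ((1/(η+2) + 2/(-1-η)) * lam^(η-2))) := by
        apply mul_le_mul_of_nonneg_left hI2 (by positivity)
    _ = (4/(η+2) + 8/(-1-η)) * M * (lam * lam * lam^(η-2)) := by ring
    _ = (4/(η+2) + 8/(-1-η)) * M * lam ^ η := by rw [hpowf]
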